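/- arXiv:1009.4126 — 4 statements merged into one kernel-verified Lean document; each statement's English description precedes it below -/
import Mathlib

section
/- Let p be a prime, O = ℤ[E,F]/(E^{p-1}F - p), with λ, μ the images of E, F, and P(X) = X^p + Σ_{i=1}^{p-1} (1/p)·C(p,i)·λ^{i-1}·μ·X^i. Then P(X + Y + λXY) = P(X) + P(Y) + λ^p·P(X)·P(Y) in O[X,Y]. -/
noncomputable section

set_option maxHeartbeats 1000000
set_option synthInstance.maxHeartbeats 200000

/-- The ring `O = ℤ[E,F]/(E^(p-1) F - p)`. -/
abbrev TOring (p : ℕ) : Type :=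
  MvPolynomial (Fin 2) ℤ ⧸
    Ideal.span {(MvPolynomial.X 0 : MvPolynomial (Fin 2) ℤ) ^ (p - 1) * MvPolynomial.X 1 -
      (p : MvPolynomial (Fin 2) ℤ)}

/-- `λ`, the image of `E`. -/
def lam (p : ℕ) : TOring p := Ideal.Quotient.mk _ (MvPolynomial.X 0)

/-- `μ`, the image of `F`. -/
def mu (p : ℕ) : TOring p := Ideal.Quotient.mk _ (MvPolynomial.X 1)

/-- `P(X) = X^p + ∑_{i=1}^{p-1} (C(p,i)/p) λ^(i-1) μ X^i`. -/
def Ppoly (p : ℕ) : Polynomial (TOring p) :=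
  Polynomial.X ^ p +
    ∑ i ∈ Finset.Ico 1 p,
      Polynomial.C (((p.choose i / p : ℕ) : TOring p) * lam p ^ (i - 1) * mu p) *
        Polynomial.X ^ i

lemma prime_X0 : Prime (MvPolynomial.X 0 : MvPolynomial (Fin 2) ℤ) := by
  rw [← MulEquiv.prime_iff (MvPolynomial.finSuccEquiv ℤ 1).toRingEquiv.toMulEquiv]
  simpa [MvPolynomial.finSuccEquiv_X_zero] using
    (Polynomial.prime_X : Prime (Polynomial.X (R := MvPolynomial (Fin 1) ℤ)))

lemma not_X0_dvd_rel (p : ℕ) (hp : p.Prime) :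
    ¬ (MvPolynomial.X 0 : MvPolynomial (Fin 2) ℤ) ∣
      ((MvPolynomial.X 0 : MvPolynomial (Fin 2) ℤ) ^ (p - 1) * MvPolynomial.X 1 -
        (p : MvPolynomial (Fin 2) ℤ)) := by
  rintro ⟨g, hg⟩
  have h0 := congrArg MvPolynomial.constantCoeff hg
  have h2 := hp.two_le
  simp only [map_sub, map_mul, map_pow, MvPolynomial.constantCoeff_X,
    zero_pow (show p - 1 ≠ 0 by omega), zero_mul, mul_zero, zero_sub, neg_eq_zero,
    map_natCast, Nat.cast_eq_zero] at h0
  omega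

lemma lam_regular (p : ℕ) (hp : p.Prime) : IsLeftRegular (lam p) := by
  intro a b hab
  obtain ⟨qa, rfl⟩ := Ideal.Quotient.mk_surjective a
  obtain ⟨qb, rfl⟩ := Ideal.Quotient.mk_surjective b
  rw [Ideal.Quotient.eq]
  have hab' : (Ideal.Quotient.mk _ (MvPolynomial.X 0 * qa) : TOring p) =
      Ideal.Quotient.mk _ (MvPolynomial.X 0 * qb) := by
    simpa [map_mul, lam] using hab
  rw [Ideal.Quotient.eq, Ideal.mem_span_singleton] at hab'
  rw [Ideal.mem_span_singleton]
  obtain ⟨g, hg⟩ := hab'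
  have hXg : (MvPolynomial.X 0 : MvPolynomial (Fin 2) ℤ) ∣
      ((MvPolynomial.X 0 : MvPolynomial (Fin 2) ℤ) ^ (p - 1) * MvPolynomial.X 1 -
        (p : MvPolynomial (Fin 2) ℤ)) * g :=
    ⟨qa - qb, by linear_combination -hg⟩
  rcases (prime_X0.dvd_mul.mp hXg) with h | h
  · exact absurd h (not_X0_dvd_rel p hp)
  · obtain ⟨g', rfl⟩ := h
    refine ⟨g', ?_⟩
    apply mul_left_cancel₀ prime_X0.ne_zero
    linear_combination hg

lemma C_regular {R σ : Type*} [CommRing R] {r : R} (h : IsLeftRegular r) :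
    IsLeftRegular (MvPolynomial.C r : MvPolynomial σ R) := by
  intro f g hfg
  ext m
  apply h
  simpa [MvPolynomial.coeff_C_mul] using congrArg (MvPolynomial.coeff m) hfg

lemma p_eq (p : ℕ) : (p : TOring p) = lam p ^ (p - 1) * mu p := by
  rw [lam, mu, ← map_pow, ← map_mul, ← map_natCast (Ideal.Quotient.mk _), eq_comm,
    Ideal.Quotient.eq, Ideal.mem_span_singleton]

lemma choose_lam (p : ℕ) (hp : p.Prime) (i : ℕ) (h1 : 1 ≤ i) (h2 : i < p) :
    ((p.choose i : ℕ) : TOring p) * lam p ^ i =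
      lam p ^ p * (((p.choose i / p : ℕ) : TOring p) * lam p ^ (i - 1) * mu p) := by
  have hd : (p.choose i / p) * p = p.choose i :=
    Nat.div_mul_cancel (hp.dvd_choose_self (by omega) h2)
  have hc : ((p.choose i : ℕ) : TOring p) =
      ((p.choose i / p : ℕ) : TOring p) * (lam p ^ (p - 1) * mu p) := by
    conv_lhs => rw [← hd]
    push_cast
    rw [p_eq]
  have hpow : lam p ^ (p - 1) * lam p ^ i = lam p ^ p * lam p ^ (i - 1) := by
    have h3 := hp.two_le
    have he : p - 1 + i = p + (i - 1) := by omega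
    rw [← pow_add, ← pow_add, he]
  rw [hc]
  linear_combination ((p.choose i / p : ℕ) : TOring p) * mu p * hpow

lemma one_add_pow (p : ℕ) (hp : p.Prime) {A : Type*} [CommRing A] [Algebra (TOring p) A]
    (x : A) :
    (1 + algebraMap (TOring p) A (lam p) * x) ^ p
      = 1 + algebraMap (TOring p) A (lam p ^ p) * Polynomial.aeval x (Ppoly p) := by
  have hsplit : Finset.range p = insert 0 (Finset.Ico 1 p) := by
    ext i
    simp only [Finset.mem_range, Finset.mem_insert, Finset.mem_Ico]
    have h2 := hp.two_le
    omega
  have hPev : Polynomial.aeval x (Ppoly p) =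
      x ^ p + ∑ i ∈ Finset.Ico 1 p,
        algebraMap (TOring p) A (((p.choose i / p : ℕ) : TOring p) * lam p ^ (i - 1) * mu p)
          * x ^ i := by
    rw [Ppoly]
    simp [Polynomial.aeval_C]
  calc (1 + algebraMap (TOring p) A (lam p) * x) ^ p
      = ∑ k ∈ Finset.range (p + 1),
          (algebraMap (TOring p) A (lam p) * x) ^ k * (p.choose k : A) := by
        rw [add_comm 1, add_pow]
        simp
    _ = (algebraMap (TOring p) A (lam p) * x) ^ 0 * (p.choose 0 : A) +
        (∑ k ∈ Finset.Ico 1 p,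
          (algebraMap (TOring p) A (lam p) * x) ^ k * (p.choose k : A)) +
        (algebraMap (TOring p) A (lam p) * x) ^ p * (p.choose p : A) := by
        rw [Finset.sum_range_succ, hsplit, Finset.sum_insert (by simp)]
    _ = 1 + algebraMap (TOring p) A (lam p ^ p) * Polynomial.aeval x (Ppoly p) := by
        rw [hPev]
        simp only [pow_zero, Nat.choose_zero_right, Nat.cast_one, mul_one,
          Nat.choose_self, mul_pow, map_pow, mul_add, Finset.mul_sum]
        have hterm : ∀ k ∈ Finset.Ico 1 p,
            (algebraMap (TOring p) A (lam p)) ^ k * x ^ k * (p.choose k : A) =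
            (algebraMap (TOring p) A (lam p)) ^ p *
              (algebraMap (TOring p) A
                (((p.choose k / p : ℕ) : TOring p) * lam p ^ (k - 1) * mu p) * x ^ k) := by
          intro k hk
          rw [Finset.mem_Ico] at hk
          have := choose_lam p hp k hk.1 hk.2
          have hmap := congrArg (algebraMap (TOring p) A) this
          rw [map_mul, map_mul, map_pow, map_pow, map_natCast] at hmap
          calc (algebraMap (TOring p) A (lam p)) ^ k * x ^ k * (p.choose k : A)
              = ((p.choose k : A) * (algebraMap (TOring p) A (lam p)) ^ k) * x ^ k := by ring
            _ = ((algebraMap (TOring p) A (lam p)) ^ p *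
                  algebraMap (TOring p) A
                    (((p.choose k / p : ℕ) : TOring p) * lam p ^ (k - 1) * mu p)) * x ^ k := by
                rw [hmap, map_mul, map_mul, map_pow, map_natCast]
            _ = _ := by ring
        rw [Finset.sum_congr rfl hterm]
        ring

open MvPolynomial in
theorem P_is_additive_for_star (p : ℕ) (hp : p.Prime) :
    Polynomial.aeval
        ((X 0 : MvPolynomial (Fin 2) (TOring p)) + X 1 + MvPolynomial.C (lam p) * (X 0 * X 1))
        (Ppoly p) =
      Polynomial.aeval (X 0 : MvPolynomial (Fin 2) (TOring p)) (Ppoly p) +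
        Polynomial.aeval (X 1 : MvPolynomial (Fin 2) (TOring p)) (Ppoly p) +
        MvPolynomial.C (lam p ^ p) *
          (Polynomial.aeval (X 0 : MvPolynomial (Fin 2) (TOring p)) (Ppoly p) *
            Polynomial.aeval (X 1 : MvPolynomial (Fin 2) (TOring p)) (Ppoly p)) := by
  set A := MvPolynomial (Fin 2) (TOring p)
  set x : A := X 0 with hx
  set y : A := X 1 with hy
  set s : A := x + y + MvPolynomial.C (lam p) * (x * y) with hs
  have ha : algebraMap (TOring p) A = MvPolynomial.C := MvPolynomial.algebraMap_eq _ _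
  have h1 := one_add_pow p hp (A := A) x
  have h2 := one_add_pow p hp (A := A) y
  have h3 := one_add_pow p hp (A := A) s
  rw [ha] at h1 h2 h3
  have hprod : (1 + MvPolynomial.C (lam p) * s) =
      (1 + MvPolynomial.C (lam p) * x) * (1 + MvPolynomial.C (lam p) * y) := by
    rw [hs]; ring
  have heq : (1 : A) + MvPolynomial.C (lam p ^ p) * Polynomial.aeval s (Ppoly p) =
      (1 + MvPolynomial.C (lam p ^ p) * Polynomial.aeval x (Ppoly p)) *
        (1 + MvPolynomial.C (lam p ^ p) * Polynomial.aeval y (Ppoly p)) := by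
    rw [← h3, hprod, mul_pow, h1, h2]
  exact C_regular ((lam_regular p hp).pow p) (by linear_combination heq)
end
end

section
/- In the ring O = ℤ[E,F]/(E^{p-1}F - p) with p prime, the image λ of E is not a zero divisor. -/
noncomputable section

open MvPolynomial in
/-- Equivalence `ℤ[E,F] ≃ (ℤ[X])[Y]` sending `F` to `Y` and `E` to `C X`. -/
def myEquiv : MvPolynomial (Fin 2) ℤ ≃ₐ[ℤ] Polynomial (Polynomial ℤ) :=
  (renameEquiv ℤ (Equiv.swap (0 : Fin 2) 1)).trans <|
    (finSuccEquiv ℤ 1).trans <|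
      Polynomial.mapAlgEquiv <|
        (finSuccEquiv ℤ 0).trans (Polynomial.mapAlgEquiv (isEmptyAlgEquiv ℤ (Fin 0)))

open MvPolynomial in
theorem myEquiv_X1 : myEquiv (X 1) = Polynomial.X := by
  simp [myEquiv, finSuccEquiv_X_zero]

open MvPolynomial in
theorem myEquiv_X0 : myEquiv (X 0) = Polynomial.C Polynomial.X := by
  simp [myEquiv]
  rw [show ((1 : Fin 2)) = Fin.succ 0 from rfl, finSuccEquiv_X_succ]
  simp [Polynomial.coe_mapAlgEquiv, finSuccEquiv_X_zero]

def gpoly (p : ℕ) : Polynomial (Polynomial ℤ) :=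
  Polynomial.C (Polynomial.X ^ (p - 1)) * Polynomial.X - Polynomial.C (Polynomial.C (p : ℤ))

/-- The generator of the defining ideal of `TOring p`. -/
def qgen (p : ℕ) : MvPolynomial (Fin 2) ℤ :=
  (MvPolynomial.X 0 : MvPolynomial (Fin 2) ℤ) ^ (p - 1) * MvPolynomial.X 1 -
    (p : MvPolynomial (Fin 2) ℤ)

theorem myEquiv_qgen (p : ℕ) : myEquiv (qgen p) = gpoly p := by
  rw [qgen, gpoly, map_sub, map_mul, map_pow, myEquiv_X0, myEquiv_X1, map_natCast]
  rw [← Polynomial.C_pow]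
  norm_num [Polynomial.C_eq_natCast]

theorem gpoly_coeff1 (p : ℕ) : (gpoly p).coeff 1 = Polynomial.X ^ (p - 1) := by
  rw [gpoly, Polynomial.coeff_sub, Polynomial.coeff_C_mul, Polynomial.coeff_X_one,
    Polynomial.coeff_C]
  norm_num

theorem gpoly_coeff0 (p : ℕ) : (gpoly p).coeff 0 = -Polynomial.C (p : ℤ) := by
  rw [gpoly, Polynomial.coeff_sub, Polynomial.coeff_C_mul, Polynomial.coeff_X_zero,
    Polynomial.coeff_C]
  norm_num

theorem gpoly_primitive (p : ℕ) (hp : p.Prime) : (gpoly p).IsPrimitive := by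
  intro r hr
  rw [Polynomial.C_dvd_iff_dvd_coeff] at hr
  have h1 : r ∣ Polynomial.X ^ (p - 1) := gpoly_coeff1 p ▸ hr 1
  have h0 : r ∣ Polynomial.C (p : ℤ) := dvd_neg.mp (gpoly_coeff0 p ▸ hr 0)
  have hC : (Polynomial.C (p : ℤ)) ≠ 0 := by simp [hp.ne_zero]
  have hdeg : r.natDegree = 0 := by
    have := Polynomial.natDegree_le_of_dvd h0 hC
    simpa using this
  obtain ⟨n, rfl⟩ := Polynomial.natDegree_eq_zero.mp hdeg
  rw [Polynomial.C_dvd_iff_dvd_coeff] at h1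
  have := h1 (p - 1)
  simp [Polynomial.coeff_X_pow] at this
  exact Polynomial.isUnit_C.mpr (isUnit_of_dvd_one this)

theorem gpoly_prime (p : ℕ) (hp : p.Prime) : Prime (gpoly p) := by
  rw [← UniqueFactorizationMonoid.irreducible_iff_prime]
  set K := FractionRing (Polynomial ℤ)
  rw [(gpoly_primitive p hp).irreducible_iff_irreducible_map_fraction_map (K := K)]
  apply Polynomial.irreducible_of_degree_eq_one
  rw [Polynomial.degree_map_eq_of_injective (IsFractionRing.injective (Polynomial ℤ) K)]
  have h : gpoly p = Polynomial.C (Polynomial.X ^ (p - 1)) * Polynomial.X +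
      Polynomial.C (-Polynomial.C (p : ℤ)) := by
    simp [gpoly, sub_eq_add_neg]
  rw [h]
  exact Polynomial.degree_linear (pow_ne_zero _ Polynomial.X_ne_zero)

theorem qgen_prime (p : ℕ) (hp : p.Prime) : Prime (qgen p) := by
  have := gpoly_prime p hp
  rw [← myEquiv_qgen p] at this
  exact (MulEquiv.prime_iff myEquiv.toRingEquiv.toMulEquiv).mp this

theorem qgen_not_dvd_X0 (p : ℕ) (hp : p.Prime) :
    ¬ (qgen p ∣ (MvPolynomial.X 0 : MvPolynomial (Fin 2) ℤ)) := by
  intro h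
  have h2 := map_dvd (MvPolynomial.eval (fun i : Fin 2 => if i = 0 then (1 : ℤ) else 0)) h
  rw [qgen] at h2
  simp [MvPolynomial.eval_X] at h2
  have hu := isUnit_of_dvd_one h2
  rw [Int.isUnit_iff] at hu
  have h1 := hp.one_lt
  rcases hu with h' | h' <;> omega

theorem lam_not_zeroDivisor (p : ℕ) (hp : p.Prime) :
    ∀ x : TOring p, lam p * x = 0 → x = 0 := by
  have hq := qgen_prime p hp
  haveI hI : (Ideal.span {(MvPolynomial.X 0 : MvPolynomial (Fin 2) ℤ) ^ (p - 1) *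
      MvPolynomial.X 1 - (p : MvPolynomial (Fin 2) ℤ)}).IsPrime :=
    (Ideal.span_singleton_prime hq.ne_zero).mpr hq
  haveI : IsDomain (TOring p) := Ideal.Quotient.isDomain _
  have hlam : lam p ≠ 0 := by
    rw [lam, Ne, Ideal.Quotient.eq_zero_iff_mem, Ideal.mem_span_singleton]
    exact qgen_not_dvd_X0 p hp
  intro x hx
  rcases mul_eq_zero.mp hx with h | h
  · exact absurd h hlam
  · exact h
end
end

section
/- Let p be prime, R a commutative ring containing elements λ, μ with λ^{p-1}μ = p, and define φ(u) = u^p + Σ_{i=1}^{p-1} (1/p)·C(p,i)·λ^{i-1}·μ·u^i for u ∈ R. Then for all u ∈ R, 1 + λ^p·φ(u) = (1 + λu)^p. -/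
/-- If `λ^(p-1) μ = p` then `1 + λ^p φ(u) = (1 + λu)^p`, where
`φ(u) = u^p + ∑_{i=1}^{p-1} (C(p,i)/p) λ^(i-1) μ u^i`. -/
theorem one_add_lam_pow_mul_phi (p : ℕ) (hp : p.Prime) (R : Type*) [CommRing R]
    (lam mu : R) (hlm : lam ^ (p - 1) * mu = (p : R)) (u : R) :
    1 + lam ^ p *
        (u ^ p + ∑ i ∈ Finset.Ico 1 p, ((p.choose i / p : ℕ) : R) * lam ^ (i - 1) * mu * u ^ i) =
      (1 + lam * u) ^ p := by
  have hp1 : 1 ≤ p := hp.one_lt.le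
  rw [add_comm (1 : R) (lam * u), add_pow]
  simp only [one_pow, mul_one]
  rw [Finset.sum_range_succ, Finset.range_eq_Ico,
    Finset.sum_eq_sum_Ico_succ_bot (by omega : 0 < p)]
  simp only [pow_zero, Nat.choose_zero_right, Nat.cast_one, one_mul, Nat.choose_self]
  rw [mul_add, Finset.mul_sum]
  have hsum : ∑ i ∈ Finset.Ico 1 p,
      lam ^ p * (((p.choose i / p : ℕ) : R) * lam ^ (i - 1) * mu * u ^ i) =
      ∑ i ∈ Finset.Ico 1 p, (lam * u) ^ i * (p.choose i : R) := by
    refine Finset.sum_congr rfl fun i hi => ?_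
    rw [Finset.mem_Ico] at hi
    have hpow : lam ^ p * lam ^ (i - 1) = lam ^ (p - 1) * lam ^ i := by
      rw [← pow_add, ← pow_add]; congr 1; omega
    have hC : ((p.choose i / p : ℕ) : R) * (p : R) = (p.choose i : R) := by
      rw [← Nat.cast_mul, Nat.div_mul_cancel (hp.dvd_choose_self (by omega) hi.2)]
    calc lam ^ p * (((p.choose i / p : ℕ) : R) * lam ^ (i - 1) * mu * u ^ i)
        = ((p.choose i / p : ℕ) : R) * (lam ^ p * lam ^ (i - 1) * mu) * u ^ i := by ring
      _ = ((p.choose i / p : ℕ) : R) * (lam ^ (p - 1) * mu) * (lam ^ i * u ^ i) := by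
          rw [hpow]; ring
      _ = (lam * u) ^ i * (p.choose i : R) := by
          rw [hlm, mul_pow, ← hC]; ring
  rw [hsum, mul_pow]
  ring
end

section
/- Let p be prime, R a commutative ring with λ,μ ∈ R satisfying λ^{p-1}μ = p, and φ(u) = u^p + Σ_{i=1}^{p-1}(1/p)C(p,i)λ^{i-1}μu^i. Then φ is a homomorphism for the group laws u₁⋆u₂ = u₁+u₂+λu₁u₂ (source) and v₁⋆'v₂ = v₁+v₂+λ^p v₁v₂ (target): φ(u₁ + u₂ + λu₁u₂) = φ(u₁) + φ(u₂) + λ^p φ(u₁)φ(u₂) for all u₁,u₂ ∈ R. -/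
open Finset Polynomial

private noncomputable def phiF (p : ℕ) {R : Type*} [CommRing R] (lam mu u : R) : R :=
  u ^ p + ∑ i ∈ Finset.Ico 1 p, ((p.choose i / p : ℕ) : R) * lam ^ (i - 1) * mu * u ^ i

private lemma phiF_map {R S : Type*} [CommRing R] [CommRing S] (f : R →+* S)
    (p : ℕ) (lam mu u : R) : f (phiF p lam mu u) = phiF p (f lam) (f mu) (f u) := by
  simp [phiF, map_sum, map_mul, map_pow]

private lemma key (p : ℕ) (hp : p.Prime) {R : Type*} [CommRing R] (lam mu : R)
    (hlm : lam ^ (p - 1) * mu = (p : R)) (u : R) :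
    lam ^ p * phiF p lam mu u = (1 + lam * u) ^ p - 1 := by
  have hp0 : 0 < p := hp.pos
  have hterm : ∀ i ∈ Finset.Ico 1 p,
      lam ^ p * (((p.choose i / p : ℕ) : R) * lam ^ (i - 1) * mu * u ^ i)
        = (lam * u) ^ i * (p.choose i : R) := by
    intro i hi
    obtain ⟨hi1, hi2⟩ := Finset.mem_Ico.mp hi
    have hdvd : p ∣ p.choose i := hp.dvd_choose_self (by omega) hi2
    have hcast : ((p.choose i / p : ℕ) : R) * (p : R) = (p.choose i : R) := by
      rw [← Nat.cast_mul, Nat.div_mul_cancel hdvd]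
    have hpow : lam ^ p * lam ^ (i - 1) = lam ^ i * lam ^ (p - 1) := by
      rw [← pow_add, ← pow_add]; congr 1; omega
    calc lam ^ p * (((p.choose i / p : ℕ) : R) * lam ^ (i - 1) * mu * u ^ i)
        = ((p.choose i / p : ℕ) : R) * (lam ^ p * lam ^ (i - 1)) * mu * u ^ i := by ring
      _ = ((p.choose i / p : ℕ) : R) * (lam ^ i * lam ^ (p - 1)) * mu * u ^ i := by rw [hpow]
      _ = ((p.choose i / p : ℕ) : R) * (lam ^ (p - 1) * mu) * (lam ^ i * u ^ i) := by ring
      _ = ((p.choose i / p : ℕ) : R) * (p : R) * (lam * u) ^ i := by rw [hlm, mul_pow]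
      _ = (lam * u) ^ i * (p.choose i : R) := by rw [hcast]; ring
  have hbin : (1 + lam * u) ^ p
      = ∑ k ∈ Finset.range (p + 1), (lam * u) ^ k * (p.choose k : R) := by
    rw [add_comm]
    simpa using add_pow (lam * u) 1 p
  have hsplit : ∑ k ∈ Finset.range (p + 1), (lam * u) ^ k * (p.choose k : R)
      = 1 + (∑ i ∈ Finset.Ico 1 p, (lam * u) ^ i * (p.choose i : R)) + (lam * u) ^ p := by
    rw [Finset.sum_range_succ, Finset.range_eq_Ico,
      Finset.sum_eq_sum_Ico_succ_bot hp0]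
    simp [add_comm, add_assoc, add_left_comm]
  rw [phiF, mul_add, Finset.mul_sum, Finset.sum_congr rfl hterm, hbin, hsplit, mul_pow]
  ring

private lemma key2 (p : ℕ) (hp : p.Prime) {R : Type*} [CommRing R] (lam mu : R)
    (hlm : lam ^ (p - 1) * mu = (p : R)) (u₁ u₂ : R) :
    lam ^ p * (phiF p lam mu (u₁ + u₂ + lam * u₁ * u₂)
      - (phiF p lam mu u₁ + phiF p lam mu u₂
          + lam ^ p * phiF p lam mu u₁ * phiF p lam mu u₂)) = 0 := by
  have h1 := key p hp lam mu hlm u₁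
  have h2 := key p hp lam mu hlm u₂
  have h3 := key p hp lam mu hlm (u₁ + u₂ + lam * u₁ * u₂)
  have hfac : (1 + lam * (u₁ + u₂ + lam * u₁ * u₂)) = (1 + lam * u₁) * (1 + lam * u₂) := by
    ring
  have expand : lam ^ p * (phiF p lam mu (u₁ + u₂ + lam * u₁ * u₂)
      - (phiF p lam mu u₁ + phiF p lam mu u₂
          + lam ^ p * phiF p lam mu u₁ * phiF p lam mu u₂))
      = (lam ^ p * phiF p lam mu (u₁ + u₂ + lam * u₁ * u₂))
        - (lam ^ p * phiF p lam mu u₁) - (lam ^ p * phiF p lam mu u₂)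
        - (lam ^ p * phiF p lam mu u₁) * (lam ^ p * phiF p lam mu u₂) := by
    ring
  rw [expand, h1, h2, h3, hfac, mul_pow]
  ring

private lemma univ_identity (p : ℕ) (hp : p.Prime) {R : Type*} [CommRing R]
    (lam mu u₁ u₂ : R) (hlm : lam ^ (p - 1) * mu = (p : R)) :
    phiF p lam mu (u₁ + u₂ + lam * u₁ * u₂)
      = phiF p lam mu u₁ + phiF p lam mu u₂
          + lam ^ p * phiF p lam mu u₁ * phiF p lam mu u₂ := by
  classical
  -- universal ring
  set S := MvPolynomial (Fin 3) ℤ with hS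
  set A := Polynomial S with hA
  set q : A := Polynomial.X ^ (p - 1) * Polynomial.C (MvPolynomial.X 0) - (p : A) with hq
  set I : Ideal A := Ideal.span {q} with hI
  let mk : A →+* A ⧸ I := Ideal.Quotient.mk I
  have hp1 : 1 ≤ p - 1 := by have := hp.two_le; omega
  -- X is regular modulo q
  have hreg : ∀ f : A, Polynomial.X * f ∈ I → f ∈ I := by
    intro f hf
    rw [hI, Ideal.mem_span_singleton] at hf ⊢
    obtain ⟨g, hg⟩ := hf
    have h0 : (Polynomial.X * f).coeff 0 = (q * g).coeff 0 := by rw [hg]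
    rw [Polynomial.mul_coeff_zero, Polynomial.mul_coeff_zero, Polynomial.coeff_X_zero,
      zero_mul] at h0
    have hq0 : q.coeff 0 = -(p : S) := by
      rw [hq]
      rw [Polynomial.coeff_sub, Polynomial.mul_coeff_zero]
      have h1 : (Polynomial.X ^ (p - 1) : A).coeff 0 = 0 := by
        rw [Polynomial.coeff_X_pow, if_neg (by omega : ¬ (0 = p - 1))]
      rw [h1, zero_mul]
      have h2 : ((p : A)).coeff 0 = (p : S) :=
        Polynomial.natCast_coeff_zero
      rw [h2, zero_sub]
    rw [hq0] at h0
    have hg0 : g.coeff 0 = 0 := by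
      have hpne : (p : S) ≠ 0 := by
        exact_mod_cast Nat.cast_ne_zero.mpr hp.ne_zero
      have h3 : (p : S) * g.coeff 0 = 0 := by
        have := h0.symm
        rw [neg_mul, neg_eq_zero] at this
        exact this
      exact (mul_eq_zero.mp h3).resolve_left hpne
    obtain ⟨g', hg'⟩ := Polynomial.X_dvd_iff.mpr hg0
    refine ⟨g', ?_⟩
    have hXne : (Polynomial.X : A) ≠ 0 := Polynomial.X_ne_zero
    have : Polynomial.X * f = Polynomial.X * (q * g') := by
      rw [hg, hg']; ring
    exact mul_left_cancel₀ hXne this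
  -- cancellation of powers of X in the quotient
  have hcancel : ∀ b : A ⧸ I, mk Polynomial.X * b = 0 → b = 0 := by
    intro b hb
    obtain ⟨f, rfl⟩ := Ideal.Quotient.mk_surjective b
    have : mk (Polynomial.X * f) = 0 := by rw [map_mul]; exact hb
    rw [Ideal.Quotient.eq_zero_iff_mem] at this ⊢
    exact hreg f this
  have hcancelp : ∀ n : ℕ, ∀ b : A ⧸ I, (mk Polynomial.X) ^ n * b = 0 → b = 0 := by
    intro n
    induction n with
    | zero => intro b hb; simpa using hb
    | succ n ih =>
      intro b hb
      apply ih
      apply hcancel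
      have : mk Polynomial.X * (mk Polynomial.X ^ n * b) = mk Polynomial.X ^ (n + 1) * b := by
        ring
      rw [this]
      exact hb
  -- elements of the universal ring
  set lB : A ⧸ I := mk Polynomial.X with hlB
  set mB : A ⧸ I := mk (Polynomial.C (MvPolynomial.X 0)) with hmB
  set v1B : A ⧸ I := mk (Polynomial.C (MvPolynomial.X 1)) with hv1B
  set v2B : A ⧸ I := mk (Polynomial.C (MvPolynomial.X 2)) with hv2B
  have hqz : mk q = 0 := Ideal.Quotient.eq_zero_iff_mem.mpr (Ideal.subset_span rfl)
  have hlmB : lB ^ (p - 1) * mB = (p : A ⧸ I) := by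
    have : lB ^ (p - 1) * mB - (p : A ⧸ I) = mk q := by
      rw [hq, map_sub, map_mul, map_pow, map_natCast]
    rw [hqz] at this
    exact sub_eq_zero.mp this
  -- the identity holds in the universal ring
  have hB : phiF p lB mB (v1B + v2B + lB * v1B * v2B)
      = phiF p lB mB v1B + phiF p lB mB v2B
          + lB ^ p * phiF p lB mB v1B * phiF p lB mB v2B := by
    have := key2 p hp lB mB hlmB v1B v2B
    have := hcancelp p _ this
    exact sub_eq_zero.mp this
  -- transfer to R via evaluation
  let ev : S →+* R := MvPolynomial.eval₂Hom (Int.castRingHom R) ![mu, u₁, u₂]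
  let e : A →+* R := Polynomial.eval₂RingHom ev lam
  have heX : e Polynomial.X = lam := Polynomial.eval₂_X _ _
  have heM : e (Polynomial.C (MvPolynomial.X 0)) = mu := by
    show Polynomial.eval₂ ev lam _ = mu
    rw [Polynomial.eval₂_C]
    rw [show ev = MvPolynomial.eval₂Hom (Int.castRingHom R) ![mu, u₁, u₂] from rfl,
      MvPolynomial.eval₂Hom_X']
    rfl
  have heU1 : e (Polynomial.C (MvPolynomial.X 1)) = u₁ := by
    show Polynomial.eval₂ ev lam _ = u₁
    rw [Polynomial.eval₂_C]; rw [show ev = MvPolynomial.eval₂Hom (Int.castRingHom R) ![mu, u₁, u₂] from rfl,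
      MvPolynomial.eval₂Hom_X']
    rfl
  have heU2 : e (Polynomial.C (MvPolynomial.X 2)) = u₂ := by
    show Polynomial.eval₂ ev lam _ = u₂
    rw [Polynomial.eval₂_C]; rw [show ev = MvPolynomial.eval₂Hom (Int.castRingHom R) ![mu, u₁, u₂] from rfl,
      MvPolynomial.eval₂Hom_X']
    rfl
  have heq : e q = 0 := by
    rw [hq, map_sub, map_mul, map_pow, heX, heM, map_natCast, hlm, sub_self]
  have hlift : ∀ a ∈ I, e a = 0 := by
    intro a ha
    rw [hI, Ideal.mem_span_singleton] at ha
    obtain ⟨c, rfl⟩ := ha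
    rw [map_mul, heq, zero_mul]
  let ψ : A ⧸ I →+* R := Ideal.Quotient.lift I e hlift
  have hψl : ψ lB = lam := by rw [hlB]; exact (Ideal.Quotient.lift_mk I e hlift).trans heX
  have hψm : ψ mB = mu := by rw [hmB]; exact (Ideal.Quotient.lift_mk I e hlift).trans heM
  have hψ1 : ψ v1B = u₁ := by rw [hv1B]; exact (Ideal.Quotient.lift_mk I e hlift).trans heU1
  have hψ2 : ψ v2B = u₂ := by rw [hv2B]; exact (Ideal.Quotient.lift_mk I e hlift).trans heU2
  have := congrArg ψ hB
  simp only [phiF_map (R := A ⧸ I) (S := R) ψ, map_add, map_mul, map_pow, hψl, hψm, hψ1, hψ2] at this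
  exact this

/-- If `λ^(p-1) μ = p` then `φ(u) = u^p + ∑_{i=1}^{p-1} (C(p,i)/p) λ^(i-1) μ u^i` is a
homomorphism from the group law `u₁ ⋆ u₂ = u₁ + u₂ + λ u₁ u₂` to the group law
`v₁ ⋆' v₂ = v₁ + v₂ + λ^p v₁ v₂`. -/
theorem phi_hom (p : ℕ) (hp : p.Prime) (R : Type*) [CommRing R]
    (lam mu : R) (hlm : lam ^ (p - 1) * mu = (p : R)) :
    letI phi : R → R := fun u =>
      u ^ p + ∑ i ∈ Finset.Ico 1 p, ((p.choose i / p : ℕ) : R) * lam ^ (i - 1) * mu * u ^ i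
    ∀ u₁ u₂ : R,
      phi (u₁ + u₂ + lam * u₁ * u₂) = phi u₁ + phi u₂ + lam ^ p * phi u₁ * phi u₂ := by
  intro u₁ u₂
  exact univ_identity p hp lam mu u₁ u₂ hlm
end
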